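/- arXiv:1211.4164 — 2 statements merged into one kernel-verified Lean document; each statement's English description precedes it below -/
import Mathlib

section
/- Every special orthogonal transformation of ℝ⁴ restricted to S³ has the form x ↦ g x h for some unit quaternions g, h ∈ S³, where the products are quaternion multiplication. -/
namespace SO4QuaternionAux
open Quaternion Submodule
noncomputable section
local notation "H" => Quaternion ℝ

def B : Module.Basis (Fin 4) ℝ H := QuaternionAlgebra.basisOneIJK (-1:ℝ) 0 (-1)

lemma B_repr (q : H) : ⇑(B.repr q) = ![q.re, q.imI, q.imJ, q.imK] :=
  QuaternionAlgebra.coe_basisOneIJK_repr _ _ _ q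

def qmk (a b c d : ℝ) : H := ⟨a, b, c, d⟩
@[simp] lemma qmk_re (a b c d : ℝ) : (qmk a b c d).re = a := rfl
@[simp] lemma qmk_imI (a b c d : ℝ) : (qmk a b c d).imI = b := rfl
@[simp] lemma qmk_imJ (a b c d : ℝ) : (qmk a b c d).imJ = c := rfl
@[simp] lemma qmk_imK (a b c d : ℝ) : (qmk a b c d).imK = d := rfl

lemma B0 : B ⟨0, by norm_num⟩ = (1 : H) := B.repr.injective <| by
  ext i
  rw [Module.Basis.repr_self]
  fin_cases i <;>
    simp [B_repr, Finsupp.single_apply]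
lemma B1 : B ⟨1, by norm_num⟩ = qmk 0 1 0 0 := B.repr.injective <| by
  ext i
  rw [Module.Basis.repr_self]
  fin_cases i <;> simp [B_repr, Finsupp.single_apply]
lemma B2 : B ⟨2, by norm_num⟩ = qmk 0 0 1 0 := B.repr.injective <| by
  ext i
  rw [Module.Basis.repr_self]
  fin_cases i <;> simp [B_repr, Finsupp.single_apply]
lemma B3 : B ⟨3, by norm_num⟩ = qmk 0 0 0 1 := B.repr.injective <| by
  ext i
  rw [Module.Basis.repr_self]
  fin_cases i <;> simp [B_repr, Finsupp.single_apply]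

lemma toMatrix_entry (f : H →ₗ[ℝ] H) (i j : Fin 4) :
    LinearMap.toMatrix B B f i j = ![(f (B j)).re, (f (B j)).imI, (f (B j)).imJ, (f (B j)).imK] i := by
  rw [LinearMap.toMatrix_apply, ← B_repr]

lemma det_mulLeft (a : H) : LinearMap.det (LinearMap.mulLeft ℝ a) = (normSq a)^2 := by
  rw [← LinearMap.det_toMatrix B]
  have hM : LinearMap.toMatrix B B (LinearMap.mulLeft ℝ a) =
      !![a.re, -a.imI, -a.imJ, -a.imK;
         a.imI, a.re, -a.imK, a.imJ;
         a.imJ, a.imK, a.re, -a.imI;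
         a.imK, -a.imJ, a.imI, a.re] := by
    ext i j
    fin_cases j <;> rw [toMatrix_entry] <;> rw [show ((LinearMap.mulLeft ℝ a) (B _)) = a * B _ from rfl] <;>
      simp only [B0, B1, B2, B3] <;> fin_cases i <;>
      simp [Quaternion.re_mul, Quaternion.imI_mul,
        Quaternion.imJ_mul, Quaternion.imK_mul, Quaternion.normSq_def'] <;> ring
  rw [hM]
  simp [Matrix.det_succ_row_zero, Fin.sum_univ_succ, Fin.succAbove, Quaternion.normSq_def']
  ring

lemma det_mulRight (b : H) : LinearMap.det (LinearMap.mulRight ℝ b) = (normSq b)^2 := by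
  rw [← LinearMap.det_toMatrix B]
  have hM : LinearMap.toMatrix B B (LinearMap.mulRight ℝ b) =
      !![b.re, -b.imI, -b.imJ, -b.imK;
         b.imI, b.re, b.imK, -b.imJ;
         b.imJ, -b.imK, b.re, b.imI;
         b.imK, b.imJ, -b.imI, b.re] := by
    ext i j
    fin_cases j <;> rw [toMatrix_entry] <;>
      rw [show ((LinearMap.mulRight ℝ b) (B _)) = B _ * b from rfl] <;>
      simp only [B0, B1, B2, B3] <;> fin_cases i <;>
      simp [Quaternion.re_mul, Quaternion.imI_mul,
        Quaternion.imJ_mul, Quaternion.imK_mul]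
  rw [hM]
  simp [Matrix.det_succ_row_zero, Fin.sum_univ_succ, Fin.succAbove, Quaternion.normSq_def']
  ring

def qstar : H →ₗ[ℝ] H where
  toFun := star
  map_add' := star_add
  map_smul' r x := Quaternion.star_smul r x

lemma det_qstar : LinearMap.det qstar = -1 := by
  rw [← LinearMap.det_toMatrix B]
  have hM : LinearMap.toMatrix B B qstar =
      !![1, 0, 0, 0; 0, -1, 0, 0; 0, 0, -1, 0; 0, 0, 0, -1] := by
    ext i j
    fin_cases j <;> rw [toMatrix_entry] <;>
      rw [show (qstar (B _)) = star (B _) from rfl] <;>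
      simp only [B0, B1, B2, B3] <;> fin_cases i <;>
      simp [Matrix.vecHead, Matrix.vecTail, QuaternionAlgebra.star_mk, Quaternion.re_star, Quaternion.imI_star,
        Quaternion.imJ_star, Quaternion.imK_star]
  rw [hM]
  simp [Matrix.det_succ_row_zero, Fin.sum_univ_succ, Fin.succAbove]

lemma key_identity (u x : H) (hu : ‖u‖ = 1) :
    -(u * star x * u) = x - (2 * (inner ℝ u x : ℝ)) • u := by
  have h1 : star u * u = 1 := by
    rw [Quaternion.star_mul_self, Quaternion.normSq_eq_norm_mul_self, hu]
    norm_num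
  have h3 : ((2 * (u * star x).re : ℝ)) • u = u * star x * u + x := by
    rw [← Quaternion.coe_mul_eq_smul, ← Quaternion.self_add_star' (u * star x), add_mul,
      StarMul.star_mul, star_star, mul_assoc x (star u) u, h1, mul_one]
  rw [show (inner ℝ u x : ℝ) = (u * star x).re from Quaternion.inner_def u x, h3]
  abel

lemma reflection_eq_quat (v : H) (hv : v ≠ 0) :
    ∃ u : H, ‖u‖ = 1 ∧ ∀ x, reflection (ℝ ∙ v)ᗮ x = -(u * star x * u) := by
  set u : H := ‖v‖⁻¹ • v with hu_def
  have hnv : ‖v‖ ≠ 0 := norm_ne_zero_iff.mpr hv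
  have hu : ‖u‖ = 1 := by
    rw [hu_def, norm_smul, norm_inv, norm_norm, inv_mul_cancel₀ hnv]
  refine ⟨u, hu, fun x => ?_⟩
  rw [reflection_orthogonal_apply, reflection_singleton_apply, key_identity u x hu]
  have hs : ((inner ℝ v x : ℝ) / ((‖v‖:ℝ) ^ 2)) • v = (inner ℝ u x : ℝ) • u := by
    rw [hu_def, real_inner_smul_left, smul_smul]
    rw [div_eq_mul_inv]
    ring_nf
  simp only [RCLike.ofReal_real_eq_id, id_eq]
  rw [hs, two_smul, two_mul, add_smul]
  abel

lemma prod_form (l : List H) :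
    ∃ a b : H, ‖a‖ = 1 ∧ ‖b‖ = 1 ∧
      ((∀ x, (l.map fun v => reflection (ℝ ∙ v)ᗮ).prod x = a * x * b) ∨
       (∀ x, (l.map fun v => reflection (ℝ ∙ v)ᗮ).prod x = a * star x * b)) := by
  induction l with
  | nil => exact ⟨1, 1, norm_one, norm_one, Or.inl fun x => by simp⟩
  | cons v l ih =>
    obtain ⟨a, b, ha, hb, hab | hab⟩ := ih <;>
      simp only [List.map_cons, List.prod_cons] <;>
      by_cases hv : v = 0
    · refine ⟨a, b, ha, hb, Or.inl fun x => ?_⟩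
      have h1 : (reflection (ℝ ∙ v)ᗮ * (l.map fun v => reflection (ℝ ∙ v)ᗮ).prod) x
          = reflection (ℝ ∙ v)ᗮ ((l.map fun v => reflection (ℝ ∙ v)ᗮ).prod x) := rfl
      rw [h1, hab x, hv]
      exact reflection_mem_subspace_eq_self (by simp)
    · obtain ⟨u, hu, hru⟩ := reflection_eq_quat v hv
      refine ⟨-(u * star b), star a * u, by simp [norm_mul, hu, hb], by simp [norm_mul, hu, ha],
        Or.inr fun x => ?_⟩
      have h1 : (reflection (ℝ ∙ v)ᗮ * (l.map fun v => reflection (ℝ ∙ v)ᗮ).prod) x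
          = reflection (ℝ ∙ v)ᗮ ((l.map fun v => reflection (ℝ ∙ v)ᗮ).prod x) := rfl
      rw [h1, hab x, hru]
      simp only [StarMul.star_mul, star_star, neg_mul, mul_neg, neg_inj, mul_assoc]
    · refine ⟨a, b, ha, hb, Or.inr fun x => ?_⟩
      have h1 : (reflection (ℝ ∙ v)ᗮ * (l.map fun v => reflection (ℝ ∙ v)ᗮ).prod) x
          = reflection (ℝ ∙ v)ᗮ ((l.map fun v => reflection (ℝ ∙ v)ᗮ).prod x) := rfl
      rw [h1, hab x, hv]
      exact reflection_mem_subspace_eq_self (by simp)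
    · obtain ⟨u, hu, hru⟩ := reflection_eq_quat v hv
      refine ⟨-(u * star b), star a * u, by simp [norm_mul, hu, hb], by simp [norm_mul, hu, ha],
        Or.inl fun x => ?_⟩
      have h1 : (reflection (ℝ ∙ v)ᗮ * (l.map fun v => reflection (ℝ ∙ v)ᗮ).prod) x
          = reflection (ℝ ∙ v)ᗮ ((l.map fun v => reflection (ℝ ∙ v)ᗮ).prod x) := rfl
      rw [h1, hab x, hru]
      simp only [StarMul.star_mul, star_star, neg_mul, mul_neg, neg_inj, mul_assoc]

theorem so4_aux (ρ : Quaternion ℝ ≃ₗᵢ[ℝ] Quaternion ℝ)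
    (hρ : LinearMap.det (ρ.toLinearEquiv : Quaternion ℝ →ₗ[ℝ] Quaternion ℝ) = 1) :
    ∃ g h : Quaternion ℝ, ‖g‖ = 1 ∧ ‖h‖ = 1 ∧ ∀ x : Quaternion ℝ, ρ x = g * x * h := by
  obtain ⟨l, -, hl⟩ := ρ.reflections_generate_dim
  obtain ⟨a, b, ha, hb, hab | hab⟩ := prod_form l
  · exact ⟨a, b, ha, hb, fun x => by rw [hl]; exact hab x⟩
  · exfalso
    have hρx : ∀ x, ρ x = a * star x * b := fun x => by rw [hl]; exact hab x
    have hcomp : (ρ.toLinearEquiv : H →ₗ[ℝ] H)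
        = (LinearMap.mulLeft ℝ a) ∘ₗ ((LinearMap.mulRight ℝ b) ∘ₗ qstar) := by
      refine LinearMap.ext fun x => ?_
      simp only [LinearMap.coe_comp, Function.comp_apply, LinearMap.mulLeft_apply,
        LinearMap.mulRight_apply]
      rw [show qstar x = star x from rfl, ← mul_assoc]
      exact hρx x
    rw [hcomp, LinearMap.det_comp, LinearMap.det_comp, det_mulLeft, det_mulRight, det_qstar] at hρ
    have hna : normSq a = 1 := by rw [Quaternion.normSq_eq_norm_mul_self, ha]; norm_num
    have hnb : normSq b = 1 := by rw [Quaternion.normSq_eq_norm_mul_self, hb]; norm_num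
    rw [hna, hnb] at hρ
    norm_num at hρ

end
end SO4QuaternionAux

/-- Every special orthogonal transformation of `ℝ⁴ ≅ ℍ` restricted to the unit sphere has
the form `x ↦ g x h` for unit quaternions `g, h`. -/
theorem so4_eq_quaternion_mul (ρ : Quaternion ℝ ≃ₗᵢ[ℝ] Quaternion ℝ)
    (hρ : LinearMap.det (ρ.toLinearEquiv : Quaternion ℝ →ₗ[ℝ] Quaternion ℝ) = 1) :
    ∃ g h : Quaternion ℝ, ‖g‖ = 1 ∧ ‖h‖ = 1 ∧ ∀ x : Quaternion ℝ, ρ x = g * x * h :=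
  SO4QuaternionAux.so4_aux ρ hρ
end

section
/- For f in the space 𝓗_k ⊗ 𝓗_k of products of degree-k spherical harmonics on S³ × S³, the operator T is given by integration against the kernel Z^{(k)}_{x̄'x y'}(y): that is, (k+1)^{-2}·projection-pairings satisfy ∬ Z^{(k)}_{x'}(x) Z^{(k)}_{y'}(y) (Tf)(x,y) dx dy = ∬ f(x,y) Z^{(k)}_{x̄' x y'}(y) dx dy for all x', y' ∈ S³. -/
open MvPolynomial MeasureTheory

noncomputable section

/-- The group of unit quaternions, `S³ ≅ SU(2)`. -/
abbrev G := Metric.sphere (0 : Quaternion ℝ) 1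

instance : MeasurableSpace G := borel G
instance : BorelSpace G := ⟨rfl⟩

/-- Coordinates of a quaternion, identifying `ℍ ≅ ℝ⁴`. -/
def qCoords (q : Quaternion ℝ) : Fin 4 → ℝ := ![q.re, q.imI, q.imJ, q.imK]

/-- The Euclidean Laplacian on polynomials on `ℝ⁴`. -/
def polyLaplacian (p : MvPolynomial (Fin 4) ℝ) : MvPolynomial (Fin 4) ℝ :=
  ∑ i : Fin 4, pderiv i (pderiv i p)

/-- The space `𝓗_k` of degree-`k` spherical harmonics on `S³`: restrictions to the unit
sphere of harmonic polynomials on `ℝ⁴` homogeneous of degree `k`. -/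
def SphHarm (k : ℕ) : Set (G → ℝ) :=
  {f | ∃ p : MvPolynomial (Fin 4) ℝ, polyLaplacian p = 0 ∧ p.IsHomogeneous k ∧
    ∀ x : G, f x = eval (qCoords (x : Quaternion ℝ)) p}

/-- `IsZonal μ k Z` says that `Z` is the reproducing kernel of the orthogonal projection
`E_k : L²(S³) → 𝓗_k`: for each `x`, `Z x ∈ 𝓗_k`; integration against `Z x` reproduces
elements of `𝓗_k` and annihilates `𝓗_ℓ` for `ℓ ≠ k`. -/
structure IsZonal (μ : Measure G) (k : ℕ) (Z : G → G → ℝ) : Prop where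
  mem : ∀ x : G, Z x ∈ SphHarm k
  repro : ∀ u ∈ SphHarm k, ∀ x : G, ∫ y : G, Z x y * u y ∂μ = u x
  annih : ∀ ℓ : ℕ, ℓ ≠ k → ∀ u ∈ SphHarm ℓ, ∀ x : G, ∫ y : G, Z x y * u y ∂μ = 0

/-- The averaging operator `Tf(x,y) = ∫ f(xg, gy) dg`. -/
def T (μ : Measure G) (f : G × G → ℝ) : G × G → ℝ :=
  fun p => ∫ g : G, f (p.1 * g, g * p.2) ∂μ

/-- Products `u(x)v(y)` of degree-`k` spherical harmonics; their span is `𝓗_k ⊗ 𝓗_k`. -/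
def ProdHarm (k : ℕ) : Set (G × G → ℝ) :=
  {F | ∃ u v : G → ℝ, u ∈ SphHarm k ∧ v ∈ SphHarm k ∧ F = fun p => u p.1 * v p.2}

section Aux

lemma continuous_qCoords : Continuous qCoords := by
  apply continuous_pi
  intro i
  fin_cases i
  · simpa [qCoords] using Quaternion.continuous_re
  · simpa [qCoords] using Quaternion.continuous_imI
  · simpa [qCoords] using Quaternion.continuous_imJ
  · simpa [qCoords] using Quaternion.continuous_imK

lemma sphHarm_continuous {k : ℕ} {u : G → ℝ} (hu : u ∈ SphHarm k) : Continuous u := by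
  obtain ⟨p, -, -, hp⟩ := hu
  have : u = fun x : G => eval (qCoords (x : Quaternion ℝ)) p := funext hp
  rw [this]
  exact (MvPolynomial.continuous_eval p).comp (continuous_qCoords.comp continuous_subtype_val)

lemma cont_integrable {X : Type*} [TopologicalSpace X] [CompactSpace X] [T2Space X]
    [MeasurableSpace X] [OpensMeasurableSpace X] (ν : Measure X) [IsFiniteMeasure ν]
    {f : X → ℝ} (hf : Continuous f) : Integrable f ν := by
  have h := hf.continuousOn.integrableOn_compact (μ := ν) isCompact_univ
  simpa [IntegrableOn, Measure.restrict_univ] using h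

lemma haar_right_invariant (μ : Measure G) [μ.IsHaarMeasure] [IsProbabilityMeasure μ] :
    μ.IsMulRightInvariant := by
  constructor
  intro g
  haveI : IsProbabilityMeasure (μ.map (· * g)) :=
    Measure.isProbabilityMeasure_map (measurable_mul_const g).aemeasurable
  exact Measure.isHaarMeasure_eq_of_isProbabilityMeasure _ _

lemma T_continuous (μ : Measure G) [IsFiniteMeasure μ] {f : G × G → ℝ} (hf : Continuous f) :
    Continuous (T μ f) := by
  have h : Continuous (Function.uncurry fun (p : G × G) (g : G) => f (p.1 * g, g * p.2)) := by
    apply hf.comp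
    exact (continuous_mul.comp ((continuous_fst.comp continuous_fst).prodMk
      continuous_snd)).prodMk
      (continuous_mul.comp (continuous_snd.prodMk (continuous_snd.comp continuous_fst)))
  have h2 := continuous_parametric_integral_of_continuous (μ := μ) h isCompact_univ
  exact (by simpa [Measure.restrict_univ] using h2 :
    Continuous fun p : G × G => ∫ g : G, f (p.1 * g, g * p.2) ∂μ)

lemma gen_first (μ : Measure G) [μ.IsHaarMeasure] [IsProbabilityMeasure μ]
    (k : ℕ) (Z : G → G → ℝ) (hZ : IsZonal μ k Z)
    (hZcont : Continuous fun p : G × G => Z p.1 p.2)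
    (hZinv : ∀ g h a b : G, Z (g * a * h) (g * b * h) = Z a b)
    {u v : G → ℝ} (hu : u ∈ SphHarm k) (hv : v ∈ SphHarm k) (x' y' : G) :
    ∫ p : G × G, Z x' p.1 * Z y' p.2 * T μ (fun p => u p.1 * v p.2) p ∂(μ.prod μ)
      = ∫ g : G, u (x' * g) * v (g * y') ∂μ := by
  haveI := haar_right_invariant μ
  have hucont := sphHarm_continuous hu
  have hvcont := sphHarm_continuous hv
  -- the triple integrand
  set Φ : (G × G) → G → ℝ :=
    fun p g => (Z x' p.1 * u (p.1 * g)) * (Z y' p.2 * v (g * p.2)) with hΦ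
  have hΦcont : Continuous (Function.uncurry Φ) := by
    apply Continuous.mul
    · apply Continuous.mul
      · exact hZcont.comp (continuous_const.prodMk
          (continuous_fst.comp continuous_fst))
      · exact hucont.comp (continuous_mul.comp
          ((continuous_fst.comp continuous_fst).prodMk continuous_snd))
    · apply Continuous.mul
      · exact hZcont.comp (continuous_const.prodMk
          (continuous_snd.comp continuous_fst))
      · exact hvcont.comp (continuous_mul.comp
          (continuous_snd.prodMk (continuous_snd.comp continuous_fst)))
  have step1 : ∀ p : G × G,
      Z x' p.1 * Z y' p.2 * T μ (fun p => u p.1 * v p.2) p = ∫ g : G, Φ p g ∂μ := by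
    intro p
    rw [T]
    rw [← integral_const_mul]
    congr 1
    ext g
    simp only [hΦ]
    ring
  calc ∫ p : G × G, Z x' p.1 * Z y' p.2 * T μ (fun p => u p.1 * v p.2) p ∂(μ.prod μ)
      = ∫ p : G × G, ∫ g : G, Φ p g ∂μ ∂(μ.prod μ) := by
        exact integral_congr_ae (Filter.Eventually.of_forall step1)
    _ = ∫ g : G, ∫ p : G × G, Φ p g ∂(μ.prod μ) ∂μ := by
        exact integral_integral_swap (cont_integrable _ hΦcont)
    _ = ∫ g : G, u (x' * g) * v (g * y') ∂μ := by
        apply integral_congr_ae (Filter.Eventually.of_forall _)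
        intro g
        have hsplit : ∫ p : G × G, Φ p g ∂(μ.prod μ)
            = (∫ x : G, Z x' x * u (x * g) ∂μ) * (∫ y : G, Z y' y * v (g * y) ∂μ) :=
          integral_prod_mul (fun x : G => Z x' x * u (x * g)) (fun y : G => Z y' y * v (g * y))
        rw [hsplit]
        have h1 : ∫ x : G, Z x' x * u (x * g) ∂μ = u (x' * g) := by
          have hcv := integral_mul_right_eq_self (μ := μ)
            (fun x => Z (x' * g) x * u x) g
          have heq : (fun x : G => Z (x' * g) (x * g) * u (x * g))
              = fun x : G => Z x' x * u (x * g) := by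
            ext x
            have := hZinv 1 g x' x
            simp only [one_mul] at this
            rw [this]
          rw [heq] at hcv
          rw [hcv, hZ.repro u hu (x' * g)]
        have h2 : ∫ y : G, Z y' y * v (g * y) ∂μ = v (g * y') := by
          have hcv := integral_mul_left_eq_self (μ := μ)
            (fun y => Z (g * y') y * v y) g
          have heq : (fun y : G => Z (g * y') (g * y) * v (g * y))
              = fun y : G => Z y' y * v (g * y) := by
            ext y
            have := hZinv g 1 y' y
            simp only [mul_one] at this
            rw [this]
          rw [heq] at hcv
          rw [hcv, hZ.repro v hv (g * y')]
        rw [h1, h2]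

lemma gen_second (μ : Measure G) [μ.IsHaarMeasure] [IsProbabilityMeasure μ]
    (k : ℕ) (Z : G → G → ℝ) (hZ : IsZonal μ k Z)
    (hZcont : Continuous fun p : G × G => Z p.1 p.2)
    (hZinv : ∀ g h a b : G, Z (g * a * h) (g * b * h) = Z a b)
    {u v : G → ℝ} (hu : u ∈ SphHarm k) (hv : v ∈ SphHarm k) (x' y' : G) :
    ∫ p : G × G, (u p.1 * v p.2) * Z (x'⁻¹ * p.1 * y') p.2 ∂(μ.prod μ)
      = ∫ g : G, u (x' * g) * v (g * y') ∂μ := by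
  have hucont := sphHarm_continuous hu
  have hvcont := sphHarm_continuous hv
  have hcont : Continuous fun p : G × G => (u p.1 * v p.2) * Z (x'⁻¹ * p.1 * y') p.2 := by
    apply Continuous.mul
    · exact (hucont.comp continuous_fst).mul (hvcont.comp continuous_snd)
    · exact hZcont.comp ((((continuous_const.mul continuous_fst).mul
        continuous_const)).prodMk continuous_snd)
  rw [integral_prod _ (cont_integrable _ hcont)]
  have hinner : ∀ x : G,
      ∫ y : G, (u x * v y) * Z (x'⁻¹ * x * y') y ∂μ = u x * v (x'⁻¹ * x * y') := by
    intro x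
    have : (fun y : G => (u x * v y) * Z (x'⁻¹ * x * y') y)
        = fun y : G => u x * (Z (x'⁻¹ * x * y') y * v y) := by
      ext y; ring
    rw [this, integral_const_mul, hZ.repro v hv (x'⁻¹ * x * y')]
  calc ∫ x : G, ∫ y : G, (u x * v y) * Z (x'⁻¹ * x * y') y ∂μ ∂μ
      = ∫ x : G, u x * v (x'⁻¹ * x * y') ∂μ :=
        integral_congr_ae (Filter.Eventually.of_forall hinner)
    _ = ∫ g : G, u (x' * g) * v (x'⁻¹ * (x' * g) * y') ∂μ :=
        (integral_mul_left_eq_self (μ := μ) (fun x => u x * v (x'⁻¹ * x * y')) x').symm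
    _ = ∫ g : G, u (x' * g) * v (g * y') ∂μ := by
        congr 1
        ext g
        congr 2
        group

end Aux

/-- For `f ∈ 𝓗_k ⊗ 𝓗_k`, the operator `T` is given by integration against the kernel
`Z^{(k)}_{x̄'xy'}(y)`:
`∬ Z^{(k)}_{x'}(x) Z^{(k)}_{y'}(y) Tf(x,y) dx dy = ∬ f(x,y) Z^{(k)}_{x̄'xy'}(y) dx dy`. -/
theorem T_kernel_on_diagonal (μ : Measure G) [μ.IsHaarMeasure] [IsProbabilityMeasure μ]
    (k : ℕ) (Z : G → G → ℝ) (hZ : IsZonal μ k Z)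
    (hZcont : Continuous fun p : G × G => Z p.1 p.2)
    (hZinv : ∀ g h a b : G, Z (g * a * h) (g * b * h) = Z a b)
    (f : G × G → ℝ) (hf : f ∈ Submodule.span ℝ (ProdHarm k)) :
    ∀ x' y' : G,
      ∫ p : G × G, Z x' p.1 * Z y' p.2 * T μ f p ∂(μ.prod μ) =
      ∫ p : G × G, f p * Z (x'⁻¹ * p.1 * y') p.2 ∂(μ.prod μ) := by
  -- strengthened motive
  suffices H : Continuous f ∧ ∀ x' y' : G,
      (∫ p : G × G, Z x' p.1 * Z y' p.2 * T μ f p ∂(μ.prod μ)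
        = ∫ g : G, f (x' * g, g * y') ∂μ) ∧
      (∫ p : G × G, f p * Z (x'⁻¹ * p.1 * y') p.2 ∂(μ.prod μ)
        = ∫ g : G, f (x' * g, g * y') ∂μ) by
    intro x' y'
    rw [(H.2 x' y').1, (H.2 x' y').2]
  induction hf using Submodule.span_induction with
  | mem F hF =>
    obtain ⟨u, v, hu, hv, rfl⟩ := hF
    have hucont := sphHarm_continuous hu
    have hvcont := sphHarm_continuous hv
    refine ⟨(hucont.comp continuous_fst).mul (hvcont.comp continuous_snd), fun x' y' => ?_⟩
    exact ⟨gen_first μ k Z hZ hZcont hZinv hu hv x' y',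
      gen_second μ k Z hZ hZcont hZinv hu hv x' y'⟩
  | zero =>
    refine ⟨continuous_const, fun x' y' => ?_⟩
    constructor
    · simp [T]
    · simp
  | add f₁ f₂ hf₁ hf₂ ih₁ ih₂ =>
    obtain ⟨hc₁, ih₁⟩ := ih₁
    obtain ⟨hc₂, ih₂⟩ := ih₂
    refine ⟨hc₁.add hc₂, fun x' y' => ?_⟩
    have hZ1 : Continuous fun p : G × G => Z x' p.1 :=
      hZcont.comp (continuous_const.prodMk continuous_fst)
    have hZ2 : Continuous fun p : G × G => Z y' p.2 :=
      hZcont.comp (continuous_const.prodMk continuous_snd)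
    have hZ3 : Continuous fun p : G × G => Z (x'⁻¹ * p.1 * y') p.2 :=
      hZcont.comp ((((continuous_const.mul continuous_fst).mul
        continuous_const)).prodMk continuous_snd)
    have hcomp : ∀ h : G × G → ℝ, Continuous h →
        Continuous fun g : G => h (x' * g, g * y') := fun h hh =>
      hh.comp ((continuous_const.mul continuous_id).prodMk
        (continuous_id.mul continuous_const))
    have hTadd : T μ (f₁ + f₂) = fun p => T μ f₁ p + T μ f₂ p := by
      ext p
      have hint : ∀ h : G × G → ℝ, Continuous h →
          Integrable (fun g : G => h (p.1 * g, g * p.2)) μ := fun h hh =>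
        cont_integrable μ (hh.comp ((continuous_const.mul continuous_id).prodMk
          (continuous_id.mul continuous_const)))
      simp only [T, Pi.add_apply]
      rw [← integral_add (hint f₁ hc₁) (hint f₂ hc₂)]
    constructor
    · have hsplit : (fun p : G × G => Z x' p.1 * Z y' p.2 * T μ (f₁ + f₂) p)
          = fun p => Z x' p.1 * Z y' p.2 * T μ f₁ p + Z x' p.1 * Z y' p.2 * T μ f₂ p := by
        ext p
        rw [hTadd]
        ring
      rw [hsplit, integral_add
        (cont_integrable (f := fun p : G × G => Z x' p.1 * Z y' p.2 * T μ f₁ p) _ ((hZ1.mul hZ2).mul (T_continuous μ hc₁)))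
        (cont_integrable (f := fun p : G × G => Z x' p.1 * Z y' p.2 * T μ f₂ p) _ ((hZ1.mul hZ2).mul (T_continuous μ hc₂))),
        (ih₁ x' y').1, (ih₂ x' y').1,
        ← integral_add (cont_integrable _ (hcomp f₁ hc₁)) (cont_integrable _ (hcomp f₂ hc₂))]
      simp
    · have hsplit : (fun p : G × G => (f₁ + f₂) p * Z (x'⁻¹ * p.1 * y') p.2)
          = fun p => f₁ p * Z (x'⁻¹ * p.1 * y') p.2 + f₂ p * Z (x'⁻¹ * p.1 * y') p.2 := by
        ext p
        simp [add_mul]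
      rw [hsplit, integral_add
        (cont_integrable (f := fun p : G × G => f₁ p * Z (x'⁻¹ * p.1 * y') p.2) _ (hc₁.mul hZ3))
        (cont_integrable (f := fun p : G × G => f₂ p * Z (x'⁻¹ * p.1 * y') p.2) _ (hc₂.mul hZ3)),
        (ih₁ x' y').2, (ih₂ x' y').2,
        ← integral_add (cont_integrable _ (hcomp f₁ hc₁)) (cont_integrable _ (hcomp f₂ hc₂))]
      simp
  | smul a f₀ hf₀ ih =>
    obtain ⟨hc, ih⟩ := ih
    refine ⟨(continuous_const (y := a)).mul hc, fun x' y' => ?_⟩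
    have hTsmul : T μ (a • f₀) = fun p => a * T μ f₀ p := by
      ext p
      simp only [T, Pi.smul_apply, smul_eq_mul]
      rw [integral_const_mul]
    constructor
    · have hsplit : (fun p : G × G => Z x' p.1 * Z y' p.2 * T μ (a • f₀) p)
          = fun p => a * (Z x' p.1 * Z y' p.2 * T μ f₀ p) := by
        ext p
        rw [hTsmul]
        ring
      rw [hsplit, integral_const_mul, (ih x' y').1, ← integral_const_mul]
      simp [mul_comm]
    · have hsplit : (fun p : G × G => (a • f₀) p * Z (x'⁻¹ * p.1 * y') p.2)
          = fun p => a * (f₀ p * Z (x'⁻¹ * p.1 * y') p.2) := by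
        ext p
        simp [mul_assoc]
      rw [hsplit, integral_const_mul, (ih x' y').2, ← integral_const_mul]
      simp
end
end
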